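/- Let Z_1,...,Z_{n+1} be i.i.d. real-valued random variables and let q̂ be the ⌈(1-ε)(n+1)⌉-th smallest value among Z_1,...,Z_n (assume ⌈(1-ε)(n+1)⌉ ≤ n). Then P(Z_{n+1} ≤ q̂) ≥ 1 - ε. -/

import Mathlib

open MeasureTheory ProbabilityTheory Finset
open scoped ENNReal NNReal

lemma sorted_getD_le_iff {s : List ℝ} (hs : s.Pairwise (· ≤ ·)) :
    ∀ {m : ℕ}, m < s.length → ∀ t : ℝ,
    (t ≤ s.getD m 0 ↔ s.countP (fun x => decide (x < t)) ≤ m) := by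
  induction s with
  | nil => intro m hm; simp at hm
  | cons a s ih =>
    intro m hm t
    rcases List.pairwise_cons.mp hs with ⟨ha, hs'⟩
    cases m with
    | zero =>
      simp only [List.getD_cons_zero, List.countP_cons, Nat.le_zero]
      constructor
      · intro hta
        have : s.countP (fun x => decide (x < t)) = 0 := by
          rw [List.countP_eq_zero]
          intro x hx
          simpa using not_lt.mpr (hta.trans (ha x hx))
        simp [this, not_lt.mpr hta]
      · intro h
        have := Nat.add_eq_zero.mp h
        by_contra hc
        simp [not_le.mp hc] at this
    | succ m =>
      simp only [List.getD_cons_succ, List.countP_cons]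
      have hm' : m < s.length := by simpa using hm
      rw [ih hs' hm' t]
      by_cases hat : a < t
      · simp [hat]
      · have hta : t ≤ a := not_lt.mp hat
        have hts : t ≤ s.getD m 0 := by
          rcases List.getD_eq_getElem s 0 hm' ▸ hta.trans (ha _ (s.getElem_mem hm')) with h
          exact h
        simp [hat, (ih hs' hm' t).mp hts, Nat.le_succ_of_le]

lemma count_small_ranks {n : ℕ} (x : Fin (n + 1) → ℝ) {k : ℕ} (hk1 : 1 ≤ k) (hk2 : k ≤ n + 1) :
    k ≤ (univ.filter (fun j : Fin (n + 1) =>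
      (univ.filter (fun i => x i < x j)).card ≤ k - 1)).card := by
  set T := univ.filter (fun j : Fin (n + 1) =>
      (univ.filter (fun i => x i < x j)).card ≤ k - 1) with hT
  by_contra hc
  push_neg at hc
  have hTc : (Tᶜ : Finset (Fin (n + 1))).Nonempty := by
    rw [← Finset.card_pos, Finset.card_compl]
    have : T.card ≤ n := by omega
    simp only [Fintype.card_fin]
    omega
  obtain ⟨j0, hj0, hmin⟩ := Finset.exists_min_image Tᶜ x hTc
  have hsub : (univ.filter (fun i => x i < x j0)) ⊆ T := by
    intro i hi
    simp only [Finset.mem_filter, Finset.mem_univ, true_and] at hi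
    by_contra hiT
    exact absurd (hmin i (Finset.mem_compl.mpr hiT)) (not_le.mpr hi)
  have : j0 ∈ T := by
    rw [hT, Finset.mem_filter]
    exact ⟨Finset.mem_univ _, le_trans (Finset.card_le_card hsub) (by omega)⟩
  exact (Finset.mem_compl.mp hj0) this

lemma countP_ofFn {m : ℕ} (f : Fin m → ℝ) (p : ℝ → Bool) :
    (List.ofFn f).countP p = (Finset.univ.filter (fun i => p (f i))).card := by
  rw [List.ofFn_eq_map, List.countP_map]
  have huniv : (Finset.univ : Finset (Fin m)).val = ↑(List.finRange m) := by
    simp [Fin.univ_def]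
  rw [Finset.card_def, Finset.filter_val, ← Multiset.countP_eq_card_filter, huniv,
    Multiset.coe_countP]
  congr 1
  funext b
  simp

/-- Split conformal quantile lemma: the `⌈(1-ε)(n+1)⌉`-th smallest of `n` i.i.d. draws
covers a fresh i.i.d. draw with probability at least `1-ε`. -/
theorem split_conformal_coverage_lower
    {Ω : Type*} [MeasurableSpace Ω] (P : Measure Ω) [IsProbabilityMeasure P]
    (n : ℕ) (Z : Fin (n + 1) → Ω → ℝ) (hmeas : ∀ i, Measurable (Z i))
    (hindep : iIndepFun Z P)
    (hident : ∀ i j, Measure.map (Z i) P = Measure.map (Z j) P)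
    (ε : ℝ) (hε0 : 0 < ε) (hε1 : ε < 1)
    (hk : ⌈(1 - ε) * (n + 1)⌉₊ ≤ n) :
    1 - ENNReal.ofReal ε ≤
      P {ω | Z (Fin.last n) ω ≤
        ((List.ofFn (fun i : Fin n => Z i.castSucc ω)).mergeSort (· ≤ ·)).getD
          (⌈(1 - ε) * (n + 1)⌉₊ - 1) 0} := by
  set k := ⌈(1 - ε) * (n + 1)⌉₊ with hkdef
  have hk1 : 1 ≤ k := by
    rw [hkdef]
    exact Nat.ceil_pos.mpr (mul_pos (by linarith) (by positivity))
  have hn1 : 1 ≤ n := le_trans hk1 hk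
  -- measure setup
  set μ := Measure.map (Z (Fin.last n)) P with hμdef
  haveI hμ : IsProbabilityMeasure μ := Measure.isProbabilityMeasure_map (hmeas _).aemeasurable
  set π := Measure.pi (fun _ : Fin (n + 1) => μ) with hπdef
  haveI : IsProbabilityMeasure π := by rw [hπdef]; infer_instance
  set J : Ω → (Fin (n + 1) → ℝ) := fun ω i => Z i ω with hJdef
  have hJ : Measurable J := measurable_pi_lambda _ hmeas
  have hmap : Measure.map J P = π := by
    refine (Measure.pi_eq fun s hs => ?_).symm
    rw [Measure.map_apply hJ (MeasurableSet.univ_pi hs)]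
    have hpre : J ⁻¹' Set.pi Set.univ s = ⋂ i ∈ Finset.univ, Z i ⁻¹' s i := by
      ext ω; simp [hJdef, Set.mem_pi]
    rw [hpre, hindep.measure_inter_preimage_eq_mul Finset.univ (fun i _ => hs i)]
    refine Finset.prod_congr rfl fun i _ => ?_
    rw [hμdef, ← hident i (Fin.last n), Measure.map_apply (hmeas i) (hs i)]
  -- events
  set A : Fin (n + 1) → Set (Fin (n + 1) → ℝ) := fun j =>
    {x | (univ.filter (fun i => x i < x j)).card ≤ k - 1} with hAdef
  have hAmeas : ∀ j, MeasurableSet (A j) := by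
    intro j
    have hf : Measurable (fun x : Fin (n + 1) → ℝ =>
        (univ.filter (fun i => x i < x j)).card) := by
      simp_rw [Finset.card_filter]
      exact Finset.measurable_sum _ (fun i _ =>
        Measurable.ite (measurableSet_lt (measurable_pi_apply i) (measurable_pi_apply j))
          measurable_const measurable_const)
    have hrw : A j = (fun x : Fin (n + 1) → ℝ =>
        (univ.filter (fun i => x i < x j)).card) ⁻¹' {c | c ≤ k - 1} := rfl
    rw [hrw]
    exact hf MeasurableSet.of_discrete
  -- permutation invariance
  have hcomp_meas : ∀ e : Equiv.Perm (Fin (n + 1)),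
      Measurable (fun x : Fin (n + 1) → ℝ => x ∘ e) :=
    fun e => measurable_pi_lambda _ (fun b => measurable_pi_apply (e b))
  have hpres : ∀ e : Equiv.Perm (Fin (n + 1)),
      Measure.map (fun x : Fin (n + 1) → ℝ => x ∘ e) π = π := by
    intro e
    have h1 := measurePreserving_piCongrLeft (fun _ : Fin (n + 1) => μ) e.symm
    have h2 : (⇑(MeasurableEquiv.piCongrLeft (fun _ : Fin (n + 1) => ℝ) e.symm))
        = fun x : Fin (n + 1) → ℝ => x ∘ e := by
      funext x
      funext b
      rw [MeasurableEquiv.coe_piCongrLeft]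
      have := Equiv.piCongrLeft_apply_apply (fun _ : Fin (n + 1) => ℝ) e.symm x (e b)
      simp only [Equiv.symm_apply_apply] at this; exact this
    have := h1.map_eq
    rwa [h2] at this
  have hcard_perm : ∀ (e : Equiv.Perm (Fin (n + 1))) (x : Fin (n + 1) → ℝ) (t : ℝ),
      (univ.filter (fun i => x (e i) < t)).card = (univ.filter (fun i => x i < t)).card := by
    intro e x t
    apply Finset.card_bij (fun i _ => e i)
    · intro a ha; simp only [Finset.mem_filter, Finset.mem_univ, true_and] at ha ⊢; exact ha
    · intro a _ b _ hab; exact e.injective hab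
    · intro b hb
      simp only [Finset.mem_filter, Finset.mem_univ, true_and] at hb
      exact ⟨e.symm b, by simp [hb], by simp⟩
  have hperm : ∀ j, π (A j) = π (A (Fin.last n)) := by
    intro j
    set e := Equiv.swap j (Fin.last n) with hedef
    have hpre : (fun x : Fin (n + 1) → ℝ => x ∘ e) ⁻¹' (A (Fin.last n)) = A j := by
      ext x
      simp only [hAdef, Set.mem_preimage, Set.mem_setOf_eq, Function.comp_apply]
      rw [hcard_perm e x]
      have : x (e (Fin.last n)) = x j := by rw [hedef, Equiv.swap_apply_right]
      rw [this]
    rw [← hpre, ← Measure.map_apply (hcomp_meas e) (hAmeas (Fin.last n)), hpres e]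
  -- pointwise sum bound
  have hpt : ∀ x : Fin (n + 1) → ℝ,
      (k : ℝ≥0∞) ≤ ∑ j, (A j).indicator (fun _ => (1 : ℝ≥0∞)) x := by
    intro x
    have hcount := count_small_ranks x hk1 (by omega : k ≤ n + 1)
    calc (k : ℝ≥0∞) ≤ ((univ.filter (fun j : Fin (n + 1) =>
          (univ.filter (fun i => x i < x j)).card ≤ k - 1)).card : ℝ≥0∞) := by
          exact_mod_cast hcount
      _ = ∑ j, (A j).indicator (fun _ => (1 : ℝ≥0∞)) x := by
          rw [Finset.card_filter]
          push_cast
          refine Finset.sum_congr rfl fun j _ => ?_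
          by_cases h : (univ.filter (fun i => x i < x j)).card ≤ k - 1
          · simp [h, hAdef, Set.indicator_of_mem, Set.mem_setOf_eq]
          · simp [h, hAdef, Set.indicator_of_notMem, Set.mem_setOf_eq]
  -- integrate
  have hsum : (k : ℝ≥0∞) ≤ (n + 1 : ℝ≥0∞) * π (A (Fin.last n)) := by
    have h1 : (k : ℝ≥0∞) = ∫⁻ _, (k : ℝ≥0∞) ∂π := by simp
    have h2 : (∫⁻ x, (k : ℝ≥0∞) ∂π) ≤ ∫⁻ x, ∑ j, (A j).indicator (fun _ => (1 : ℝ≥0∞)) x ∂π :=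
      lintegral_mono hpt
    have h3 : (∫⁻ x, ∑ j, (A j).indicator (fun _ => (1 : ℝ≥0∞)) x ∂π)
        = ∑ j, π (A j) := by
      rw [lintegral_finset_sum _ (fun j _ => measurable_const.indicator (hAmeas j))]
      refine Finset.sum_congr rfl fun j _ => ?_
      exact lintegral_indicator_one (hAmeas j)
    have h4 : (∑ j, π (A j)) = (n + 1 : ℝ≥0∞) * π (A (Fin.last n)) := by
      rw [Finset.sum_congr rfl (fun j _ => hperm j), Finset.sum_const, Finset.card_univ,
        Fintype.card_fin, nsmul_eq_mul]
      push_cast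
      ring
    calc (k : ℝ≥0∞) = ∫⁻ _, (k : ℝ≥0∞) ∂π := h1
      _ ≤ _ := h2
      _ = ∑ j, π (A j) := h3
      _ = _ := h4
  -- from the sum bound to the probability bound
  have hfinal : ENNReal.ofReal (1 - ε) ≤ π (A (Fin.last n)) := by
    have hne1 : ((n : ℝ≥0∞) + 1) ≠ 0 := by simp
    have hne2 : ((n : ℝ≥0∞) + 1) ≠ ⊤ := by simp
    rw [← ENNReal.mul_le_mul_iff_left hne1 hne2]
    have hle1 : ENNReal.ofReal (1 - ε) * ((n : ℝ≥0∞) + 1) ≤ (k : ℝ≥0∞) := by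
      have : ((n : ℝ≥0∞) + 1) = ENNReal.ofReal ((n : ℝ) + 1) := by
        rw [ENNReal.ofReal_add (by positivity) zero_le_one]
        simp [ENNReal.ofReal_natCast]
      rw [this, ← ENNReal.ofReal_mul (by linarith)]
      calc ENNReal.ofReal ((1 - ε) * ((n : ℝ) + 1)) ≤ ENNReal.ofReal (k : ℝ) := by
            apply ENNReal.ofReal_le_ofReal
            have := Nat.le_ceil ((1 - ε) * ((n : ℝ) + 1))
            rw [hkdef]
            push_cast at this ⊢
            linarith
        _ = (k : ℝ≥0∞) := ENNReal.ofReal_natCast k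
    calc ENNReal.ofReal (1 - ε) * ((n : ℝ≥0∞) + 1) ≤ (k : ℝ≥0∞) := hle1
      _ ≤ (n + 1 : ℝ≥0∞) * π (A (Fin.last n)) := hsum
      _ = π (A (Fin.last n)) * ((n : ℝ≥0∞) + 1) := by ring
  -- identify the event
  have hevent : {ω | Z (Fin.last n) ω ≤
        ((List.ofFn (fun i : Fin n => Z i.castSucc ω)).mergeSort (· ≤ ·)).getD (k - 1) 0}
      = J ⁻¹' (A (Fin.last n)) := by
    ext ω
    set t := Z (Fin.last n) ω with htdef
    set l := List.ofFn (fun i : Fin n => Z i.castSucc ω) with hldef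
    have hlen : (l.mergeSort (· ≤ ·)).length = n := by
      rw [List.length_mergeSort, hldef, List.length_ofFn]
    have hklt : k - 1 < (l.mergeSort (· ≤ ·)).length := by rw [hlen]; omega
    have hsorted : (l.mergeSort (· ≤ ·)).Pairwise (· ≤ ·) := List.pairwise_mergeSort' _ l
    have hiff := sorted_getD_le_iff hsorted hklt t
    have hcountPm : (l.mergeSort (· ≤ ·)).countP (fun x => decide (x < t))
        = l.countP (fun x => decide (x < t)) :=
      (List.mergeSort_perm l _).countP_eq _
    have hcountl : l.countP (fun x => decide (x < t))
        = (univ.filter (fun i : Fin n => Z i.castSucc ω < t)).card := by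
      rw [hldef, countP_ofFn]
      congr 1
      exact Finset.filter_congr (fun i _ => by simp)
    have hcard_eq : (univ.filter (fun i : Fin (n + 1) => Z i ω < t)).card
        = (univ.filter (fun i : Fin n => Z i.castSucc ω < t)).card := by
      rw [Finset.card_filter, Finset.card_filter, Fin.sum_univ_castSucc]
      simp [htdef]
    simp only [Set.mem_setOf_eq, Set.mem_preimage, hAdef, hJdef]
    rw [hiff, hcountPm, hcountl, ← hcard_eq]
  rw [hevent, ← hmap, Measure.map_apply hJ (hAmeas (Fin.last n)),
    show (1 : ℝ≥0∞) - ENNReal.ofReal ε = ENNReal.ofReal (1 - ε) by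
      rw [ENNReal.ofReal_sub _ hε0.le, ENNReal.ofReal_one]] at *
  exact hfinal
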